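/- Let $r, s$ be reals with $0 \le r < 1 < s$ and let $K_g, K_h > 0$. Set $\mu_0 = \frac{s-1}{s-r}\left(\frac{1-r}{s-r}\right)^{\frac{1-r}{s-1}} \frac{K_h^{-\frac{1-r}{s-1}}}{K_g}$. If $A > 0$, $0 < B \le K_h A^{(s+1)/2}$, $0 < C \le K_g A^{(r+1)/2}$ and $0 < \mu < \mu_0$, then $\mu C < G(t_0)$, where $G(t) = A t^{1-r} - B t^{s-r}$ and $t_0 = ((1-r)A/((s-r)B))^{1/(s-1)}$, i.e. $\mu C < \frac{s-1}{s-r}\left(\frac{1-r}{s-r}\right)^{\frac{1-r}{s-1}} A^{\frac{s-r}{s-1}} B^{-\frac{1-r}{s-1}}$. -/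

import Mathlib

/-- Inequalities (2.5)–(2.8) in the proof of Lemma 4(b): below the explicit threshold
`μ₀`, the Hölder/Sobolev bounds force `μC < G(t₀)`. -/
theorem stmt_10 (r s Kg Kh : ℝ) (hr0 : 0 ≤ r) (hr1 : r < 1) (hs : 1 < s)
    (hKg : 0 < Kg) (hKh : 0 < Kh)
    (μ₀ : ℝ)
    (hμ₀ : μ₀ = (s - 1) / (s - r) * ((1 - r) / (s - r)) ^ ((1 - r) / (s - 1)) *
      (Kh ^ (-((1 - r) / (s - 1))) / Kg))
    (A B C μ : ℝ) (hA : 0 < A)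
    (hB0 : 0 < B) (hB : B ≤ Kh * A ^ ((s + 1) / 2))
    (hC0 : 0 < C) (hC : C ≤ Kg * A ^ ((r + 1) / 2))
    (hμ : 0 < μ) (hμμ₀ : μ < μ₀)
    (G : ℝ → ℝ) (hG : ∀ t : ℝ, G t = A * t ^ (1 - r) - B * t ^ (s - r))
    (t₀ : ℝ) (ht₀ : t₀ = ((1 - r) * A / ((s - r) * B)) ^ (1 / (s - 1))) :
    μ * C < G t₀ ∧
    μ * C < (s - 1) / (s - r) * ((1 - r) / (s - r)) ^ ((1 - r) / (s - 1)) *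
      A ^ ((s - r) / (s - 1)) * B ^ (-((1 - r) / (s - 1))) := by
  have hs1 : (0:ℝ) < s - 1 := by linarith
  have hsr : (0:ℝ) < s - r := by linarith
  have h1r : (0:ℝ) < 1 - r := by linarith
  set α : ℝ := (1 - r) / (s - 1) with hαdef
  have hα0 : 0 < α := div_pos h1r hs1
  have hexp : α * ((s + 1) / 2) + (r + 1) / 2 = (s - r) / (s - 1) := by
    rw [hαdef]; field_simp; ring
  have hB' : 0 < B ^ α := Real.rpow_pos_of_pos hB0 _
  have hKh' : 0 < Kh ^ α := Real.rpow_pos_of_pos hKh _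
  have hA' : 0 < A ^ ((r + 1) / 2) := Real.rpow_pos_of_pos hA _
  -- key power bound
  have hBα : B ^ α ≤ Kh ^ α * A ^ (α * ((s + 1) / 2)) := by
    calc B ^ α ≤ (Kh * A ^ ((s + 1) / 2)) ^ α :=
          Real.rpow_le_rpow hB0.le hB hα0.le
      _ = Kh ^ α * (A ^ ((s + 1) / 2)) ^ α :=
          Real.mul_rpow hKh.le (by positivity)
      _ = Kh ^ α * A ^ (α * ((s + 1) / 2)) := by
          rw [← Real.rpow_mul hA.le, mul_comm ((s + 1) / 2)]
  have hArw : A ^ ((s - r) / (s - 1)) = A ^ (α * ((s + 1) / 2)) * A ^ ((r + 1) / 2) := by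
    rw [← Real.rpow_add hA, hexp]
  have key : Kh ^ (-α) * A ^ ((r + 1) / 2) ≤ A ^ ((s - r) / (s - 1)) * B ^ (-α) := by
    rw [hArw, Real.rpow_neg hKh.le, Real.rpow_neg hB0.le,
      mul_comm ((Kh ^ α)⁻¹), ← div_eq_mul_inv, ← div_eq_mul_inv,
      div_le_div_iff₀ hKh' hB']
    nlinarith [mul_le_mul_of_nonneg_right hBα hA'.le]
  -- notation for constants
  set c : ℝ := (1 - r) / (s - r) with hcdef
  have hc0 : 0 < c := div_pos h1r hsr
  set D : ℝ := (s - 1) / (s - r) * c ^ α with hDdef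
  have hD0 : 0 < D := by positivity
  have hμ₀pos : 0 < μ₀ := by rw [hμ₀]; positivity
  -- main strict inequality
  have main : μ * C < D * (A ^ ((s - r) / (s - 1)) * B ^ (-α)) := by
    have h1 : μ * C < μ₀ * C := mul_lt_mul_of_pos_right hμμ₀ hC0
    have h2 : μ₀ * C ≤ μ₀ * (Kg * A ^ ((r + 1) / 2)) :=
      mul_le_mul_of_nonneg_left hC hμ₀pos.le
    have h3 : μ₀ * (Kg * A ^ ((r + 1) / 2)) = D * (Kh ^ (-α) * A ^ ((r + 1) / 2)) := by
      rw [hμ₀, hDdef]; field_simp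
    have h4 : D * (Kh ^ (-α) * A ^ ((r + 1) / 2)) ≤ D * (A ^ ((s - r) / (s - 1)) * B ^ (-α)) :=
      mul_le_mul_of_nonneg_left key hD0.le
    calc μ * C < μ₀ * C := h1
      _ ≤ μ₀ * (Kg * A ^ ((r + 1) / 2)) := h2
      _ = D * (Kh ^ (-α) * A ^ ((r + 1) / 2)) := h3
      _ ≤ D * (A ^ ((s - r) / (s - 1)) * B ^ (-α)) := h4
  -- compute G t₀
  set x : ℝ := (1 - r) * A / ((s - r) * B) with hxdef
  have hx0 : 0 < x := by positivity
  have hxα : 0 < x ^ α := Real.rpow_pos_of_pos hx0 _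
  have ht1 : t₀ ^ (1 - r) = x ^ α := by
    rw [ht₀, ← Real.rpow_mul hx0.le]
    congr 1
    rw [hαdef]; field_simp
  have ht2 : t₀ ^ (s - r) = x * x ^ α := by
    rw [ht₀, ← Real.rpow_mul hx0.le]
    have h15 : 1 / (s - 1) * (s - r) = 1 + α := by
      rw [hαdef]; field_simp; ring
    rw [h15, Real.rpow_add hx0, Real.rpow_one]
  have hBx : B * x = (1 - r) * A / (s - r) := by
    rw [hxdef]; field_simp
  have hxαeq : x ^ α = c ^ α * (A ^ α * B ^ (-α)) := by
    have hxc : x = c * (A / B) := by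
      rw [hxdef, hcdef]; field_simp
    rw [hxc, Real.mul_rpow hc0.le (by positivity), Real.div_rpow hA.le hB0.le,
      Real.rpow_neg hB0.le, div_eq_mul_inv]
  have hAα : A * A ^ α = A ^ ((s - r) / (s - 1)) := by
    have h1α : (s - r) / (s - 1) = 1 + α := by
      rw [hαdef]; field_simp; ring
    rw [h1α, Real.rpow_add hA, Real.rpow_one]
  have hGt : G t₀ = D * (A ^ ((s - r) / (s - 1)) * B ^ (-α)) := by
    rw [hG, ht1, ht2]
    have hfac : A * x ^ α - B * (x * x ^ α) = x ^ α * (A - B * x) := by ring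
    rw [hfac, hBx, hxαeq, ← hAα, hDdef]
    field_simp
    ring
  constructor
  · exact lt_of_lt_of_eq main hGt.symm
  · have heq : (s - 1) / (s - r) * c ^ α * A ^ ((s - r) / (s - 1)) * B ^ (-α)
        = D * (A ^ ((s - r) / (s - 1)) * B ^ (-α)) := by
      rw [hDdef]; ring
    rw [heq]
    exact main
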